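/- Let n ≥ 2 and let a, b be real numbers with a² + b² = 1 and a ≠ 0. Work with complex matrices indexed by Fin 2 × Fin n (coin value L = 0 or R = 1, position in Fin n; arithmetic ⊕, ⊖ on positions is addition/subtraction modulo n). Define: T = !![a, b; b, −a] (acting on the coin), the shift S = Σ_{i=0}^{n−1} |L⟩⟨L| ⊗ |i ⊖ 1⟩⟨i| + Σ_{i=0}^{n−1} |R⟩⟨R| ⊗ |i ⊕ 1⟩⟨i|, M₁ = I₂ ⊗ (Σ_{k=1}^{n−1} |k⟩⟨k|), and E = M₁ᴴ (T ⊗ Iₙ)ᴴ Sᴴ. For integers j, k with j ≡ k (mod 2) set f(j,k) = (−1)^{(j−k)/2} · (b²/a²) · j · (n − 1 − k) and h(j,k) = (−1)^{(j−k)/2} · (b/a) · (j + k − n). Define n×n real matrices A, B, C by: A(j,j) = f(j,j) + j + 1; A(j,k) = f(j,k) if j < k and 2 ∣ (j − k); A(j,k) = f(k,j) if k < j and 2 ∣ (j − k); A(j,k) = 0 otherwise; B(j,k) = h(j,k) if 0 < j ≤ k < n and 2 ∣ (j − k), and B(j,k) = 0 otherwise; C(j,k) = A(n ⊖ j, n ⊖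 k). Let X be the (2n)×(2n) block matrix with X((L,j),(L,k)) = A(j,k), X((L,j),(R,k)) = Bᴴ(j,k), X((R,j),(L,k)) = B(j,k), X((R,j),(R,k)) = C(j,k). Then X = I + E X Eᴴ. -/

import Mathlib

set_option maxHeartbeats 1000000


open Matrix
open scoped Kronecker

/-- The coin-tossing operator `T = !![a, b; b, -a]`. -/
noncomputable def coinT (a b : ℝ) : Matrix (Fin 2) (Fin 2) ℂ :=
  !![(a : ℂ), (b : ℂ); (b : ℂ), -(a : ℂ)]

/-- The shift operator of the quantum walk on the `n`-circle:
`S = Σ_i |L⟩⟨L| ⊗ |i ⊖ 1⟩⟨i| + Σ_i |R⟩⟨R| ⊗ |i ⊕ 1⟩⟨i|`. -/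
noncomputable def shiftS (n : ℕ) [NeZero n] : Matrix (Fin 2 × Fin n) (Fin 2 × Fin n) ℂ :=
  (∑ i : Fin n, single (0 : Fin 2) (0 : Fin 2) (1 : ℂ) ⊗ₖ
      single (i - 1) i (1 : ℂ)) +
  (∑ i : Fin n, single (1 : Fin 2) (1 : Fin 2) (1 : ℂ) ⊗ₖ
      single (i + 1) i (1 : ℂ))

/-- The measurement operator `M₁ = I₂ ⊗ Σ_{k=1}^{n-1} |k⟩⟨k|`. -/
noncomputable def measM1 (n : ℕ) [NeZero n] : Matrix (Fin 2 × Fin n) (Fin 2 × Fin n) ℂ :=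
  (1 : Matrix (Fin 2) (Fin 2) ℂ) ⊗ₖ
    (∑ k ∈ Finset.univ.erase (0 : Fin n), single k k (1 : ℂ))

/-- One backward step `E = M₁ᴴ (T ⊗ Iₙ)ᴴ Sᴴ` of the quantum walk on the `n`-circle. -/
noncomputable def stepE (n : ℕ) [NeZero n] (a b : ℝ) :
    Matrix (Fin 2 × Fin n) (Fin 2 × Fin n) ℂ :=
  (measM1 n)ᴴ * (coinT a b ⊗ₖ (1 : Matrix (Fin n) (Fin n) ℂ))ᴴ * (shiftS n)ᴴ

/-- `f(j,k) = (−1)^((j−k)/2) · (b²/a²) · j · (n − 1 − k)`. -/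
noncomputable def fEnt (n : ℕ) (a b : ℝ) (j k : ℤ) : ℂ :=
  (-1 : ℂ) ^ ((j - k) / 2) * ((b : ℂ) ^ 2 / (a : ℂ) ^ 2) * (j : ℂ) * ((n : ℂ) - 1 - (k : ℂ))

/-- `h(j,k) = (−1)^((j−k)/2) · (b/a) · (j + k − n)`. -/
noncomputable def hEnt (n : ℕ) (a b : ℝ) (j k : ℤ) : ℂ :=
  (-1 : ℂ) ^ ((j - k) / 2) * ((b : ℂ) / (a : ℂ)) * ((j : ℂ) + (k : ℂ) - (n : ℂ))

/-- The diagonal block `A` of the expected-steps observable. -/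
noncomputable def blockA (n : ℕ) [NeZero n] (a b : ℝ) : Matrix (Fin n) (Fin n) ℂ :=
  Matrix.of fun j k : Fin n =>
    if j = k then fEnt n a b j j + ((j : ℕ) : ℂ) + 1
    else if (j : ℕ) < (k : ℕ) ∧ (2 : ℤ) ∣ ((j : ℤ) - (k : ℤ)) then fEnt n a b j k
    else if (k : ℕ) < (j : ℕ) ∧ (2 : ℤ) ∣ ((j : ℤ) - (k : ℤ)) then fEnt n a b k j
    else 0

/-- The off-diagonal block `B` of the expected-steps observable. -/
noncomputable def blockB (n : ℕ) [NeZero n] (a b : ℝ) : Matrix (Fin n) (Fin n) ℂ :=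
  Matrix.of fun j k : Fin n =>
    if 0 < (j : ℕ) ∧ (j : ℕ) ≤ (k : ℕ) ∧ (2 : ℤ) ∣ ((j : ℤ) - (k : ℤ)) then hEnt n a b j k
    else 0

/-- The diagonal block `C`, given by `C(j,k) = A(n ⊖ j, n ⊖ k)`. -/
noncomputable def blockC (n : ℕ) [NeZero n] (a b : ℝ) : Matrix (Fin n) (Fin n) ℂ :=
  Matrix.of fun j k : Fin n => blockA n a b (-j) (-k)

/-- The full `2n × 2n` block matrix `X = [[A, Bᴴ], [B, C]]`. -/
noncomputable def fullX (n : ℕ) [NeZero n] (a b : ℝ) :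
    Matrix (Fin 2 × Fin n) (Fin 2 × Fin n) ℂ :=
  Matrix.of fun p q : Fin 2 × Fin n =>
    if p.1 = 0 then
      (if q.1 = 0 then blockA n a b p.2 q.2 else (blockB n a b)ᴴ p.2 q.2)
    else
      (if q.1 = 0 then blockB n a b p.2 q.2 else blockC n a b p.2 q.2)

lemma shiftS_apply (n : ℕ) [NeZero n] (c d : Fin 2) (i m : Fin n) :
    shiftS n (c, i) (d, m) =
      (if c = 0 ∧ d = 0 ∧ i = m - 1 then 1 else 0) +
      (if c = 1 ∧ d = 1 ∧ i = m + 1 then 1 else 0) := by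
  simp only [shiftS, Matrix.add_apply, Matrix.sum_apply, kroneckerMap_apply, Matrix.single, of_apply]
  congr 1
  · rw [Finset.sum_eq_single m]
    · fin_cases c <;> fin_cases d <;> by_cases h : i = m - 1 <;> simp [h, eq_comm]
    · intro x _ hx; simp [hx, eq_comm]
    · simp
  · rw [Finset.sum_eq_single m]
    · fin_cases c <;> fin_cases d <;> by_cases h : i = m + 1 <;> simp [h, eq_comm]
    · intro x _ hx; simp [hx, eq_comm]
    · simp

lemma measM1_apply (n : ℕ) [NeZero n] (c d : Fin 2) (i m : Fin n) :
    measM1 n (c, i) (d, m) = if c = d ∧ i = m ∧ i ≠ 0 then 1 else 0 := by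
  simp only [measM1, kroneckerMap_apply, Matrix.sum_apply, Matrix.single, of_apply, one_apply]
  by_cases h0 : i = 0
  · rw [Finset.sum_eq_zero]
    · simp [h0]
    · intro x hx
      simp only [Finset.mem_erase] at hx
      have : ¬(x = i ∧ x = m) := fun h => hx.1 (h.1.trans h0)
      simp [this]
  · rw [Finset.sum_eq_single i]
    · rcases eq_or_ne i m with him | him
      · subst him
        by_cases hcd : c = d <;> simp [hcd, h0, eq_comm]
      · by_cases hcd : c = d <;> simp [hcd, him, eq_comm]
    · intro x _ hx
      have : ¬(x = i ∧ x = m) := fun h => hx h.1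
      simp [this]
    · intro h; exact absurd (by simp [h0]) h

lemma coinK_apply (n : ℕ) [NeZero n] (a b : ℝ) (c d : Fin 2) (i m : Fin n) :
    (coinT a b ⊗ₖ (1 : Matrix (Fin n) (Fin n) ℂ)) (c, i) (d, m) =
      if i = m then coinT a b c d else 0 := by
  simp only [kroneckerMap_apply, one_apply]
  split_ifs <;> ring

lemma coinT_real (a b : ℝ) (c d : Fin 2) :
    (starRingEnd ℂ) (coinT a b c d) = coinT a b c d := by
  fin_cases c <;> fin_cases d <;> simp [coinT]

lemma coinT_symm (a b : ℝ) (c d : Fin 2) : coinT a b c d = coinT a b d c := by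
  fin_cases c <;> fin_cases d <;> simp [coinT]

lemma stepE_apply (n : ℕ) [NeZero n] (a b : ℝ) (c e : Fin 2) (j i : Fin n) :
    stepE n a b (c, j) (e, i) =
      if j = 0 then 0 else
        (if e = 0 ∧ i = j - 1 then coinT a b c 0 else 0)
      + (if e = 1 ∧ i = j + 1 then coinT a b c 1 else 0) := by
  have hM : (measM1 n)ᴴ = measM1 n := by
    ext ⟨x, y⟩ ⟨z, w⟩
    simp only [conjTranspose_apply, measM1_apply]
    rcases eq_or_ne x z with h | h <;> rcases eq_or_ne y w with h2 | h2 <;>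
      simp [h, h2, eq_comm, and_comm]
  have hK : (coinT a b ⊗ₖ (1 : Matrix (Fin n) (Fin n) ℂ))ᴴ =
      coinT a b ⊗ₖ (1 : Matrix (Fin n) (Fin n) ℂ) := by
    ext ⟨x, y⟩ ⟨z, w⟩
    simp only [conjTranspose_apply, coinK_apply]
    rcases eq_or_ne y w with h2 | h2
    · subst h2; simp [coinT_real, coinT_symm a b x z]
    · simp [h2, Ne.symm h2]
  have hTS : ∀ (x : Fin 2) (y : Fin n),
      ((coinT a b ⊗ₖ (1 : Matrix (Fin n) (Fin n) ℂ)) * (shiftS n)ᴴ) (x, y) (e, i) =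
        (if e = 0 ∧ i = y - 1 then coinT a b x 0 else 0)
      + (if e = 1 ∧ i = y + 1 then coinT a b x 1 else 0) := by
    intro x y
    rw [mul_apply, Fintype.sum_prod_type]
    rw [Fin.sum_univ_two]
    have h1 : ∀ f : Fin 2, ∑ z : Fin n,
        (coinT a b ⊗ₖ (1 : Matrix (Fin n) (Fin n) ℂ)) (x, y) (f, z) * (shiftS n)ᴴ (f, z) (e, i)
        = coinT a b x f * (shiftS n)ᴴ (f, y) (e, i) := by
      intro f
      rw [Finset.sum_eq_single y]
      · rw [coinK_apply]; simp
      · intro z _ hz; rw [coinK_apply]; simp [Ne.symm hz]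
      · simp
    rw [h1 0, h1 1]
    simp only [conjTranspose_apply, shiftS_apply]
    fin_cases e <;>
      simp [apply_ite (starRingEnd ℂ), eq_comm, Fin.ext_iff]
  rw [stepE, hM, hK, Matrix.mul_assoc, mul_apply, Fintype.sum_prod_type]
  have h2 : ∀ x : Fin 2, ∑ y : Fin n,
      measM1 n (c, j) (x, y) *
        (((coinT a b ⊗ₖ (1 : Matrix (Fin n) (Fin n) ℂ)) * (shiftS n)ᴴ) (x, y) (e, i))
      = if c = x ∧ j ≠ 0 then
          (((coinT a b ⊗ₖ (1 : Matrix (Fin n) (Fin n) ℂ)) * (shiftS n)ᴴ) (x, j) (e, i))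
        else 0 := by
    intro x
    rw [Finset.sum_eq_single j]
    · rw [measM1_apply]
      by_cases hc : c = x <;> by_cases hj : j = (0 : Fin n) <;> simp [hc, hj]
    · intro z _ hz; rw [measM1_apply]; simp [Ne.symm hz]
    · simp
  rw [Fin.sum_univ_two, h2 0, h2 1, hTS 0 j, hTS 1 j]
  by_cases hj : j = (0 : Fin n)
  · simp [hj]
  · fin_cases c <;> simp [hj]

lemma stepE_mul_apply (n : ℕ) [NeZero n] (a b : ℝ)
    (M : Matrix (Fin 2 × Fin n) (Fin 2 × Fin n) ℂ) (c : Fin 2) (j : Fin n)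
    (q : Fin 2 × Fin n) :
    (stepE n a b * M) (c, j) q =
      if j = 0 then 0 else
        coinT a b c 0 * M (0, j - 1) q + coinT a b c 1 * M (1, j + 1) q := by
  rw [mul_apply, Fintype.sum_prod_type, Fin.sum_univ_two]
  have h1 : ∀ e : Fin 2, ∑ i : Fin n, stepE n a b (c, j) (e, i) * M (e, i) q =
      if j = 0 then 0 else
        (if e = 0 then coinT a b c 0 * M (0, j - 1) q else 0) +
        (if e = 1 then coinT a b c 1 * M (1, j + 1) q else 0) := by
    intro e
    by_cases hj : j = (0 : Fin n)
    · simp only [hj, if_pos]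
      rw [Finset.sum_eq_zero]
      intro i _; rw [stepE_apply]; simp
    · fin_cases e
      · rw [Finset.sum_eq_single (j - 1)]
        · rw [stepE_apply]; simp [hj]
        · intro i _ hi; rw [stepE_apply]; simp [hj, hi]
        · simp
      · rw [Finset.sum_eq_single (j + 1)]
        · rw [stepE_apply]; simp [hj]
        · intro i _ hi; rw [stepE_apply]; simp [hj, hi]
        · simp
  rw [h1 0, h1 1]
  by_cases hj : j = (0 : Fin n) <;> simp [hj]

lemma mul_stepE_conjT_apply (n : ℕ) [NeZero n] (a b : ℝ)
    (M : Matrix (Fin 2 × Fin n) (Fin 2 × Fin n) ℂ) (p : Fin 2 × Fin n)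
    (d : Fin 2) (k : Fin n) :
    (M * (stepE n a b)ᴴ) p (d, k) =
      if k = 0 then 0 else
        M p (0, k - 1) * coinT a b d 0 + M p (1, k + 1) * coinT a b d 1 := by
  rw [mul_apply, Fintype.sum_prod_type, Fin.sum_univ_two]
  have h1 : ∀ e : Fin 2, ∑ i : Fin n, M p (e, i) * (stepE n a b)ᴴ (e, i) (d, k) =
      if k = 0 then 0 else
        (if e = 0 then M p (0, k - 1) * coinT a b d 0 else 0) +
        (if e = 1 then M p (1, k + 1) * coinT a b d 1 else 0) := by
    intro e
    by_cases hk : k = (0 : Fin n)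
    · simp only [hk, if_pos]
      rw [Finset.sum_eq_zero]
      intro i _
      rw [conjTranspose_apply, stepE_apply]; simp
    · fin_cases e
      · rw [Finset.sum_eq_single (k - 1)]
        · rw [conjTranspose_apply, stepE_apply]
          simp [hk, coinT_real]
        · intro i _ hi; rw [conjTranspose_apply, stepE_apply]; simp [hk, hi]
        · simp
      · rw [Finset.sum_eq_single (k + 1)]
        · rw [conjTranspose_apply, stepE_apply]
          simp [hk, coinT_real]
        · intro i _ hi; rw [conjTranspose_apply, stepE_apply]; simp [hk, hi]
        · simp
  rw [h1 0, h1 1]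
  by_cases hk : k = (0 : Fin n) <;> simp [hk]

noncomputable def AZ (n : ℕ) (a b : ℝ) (x y : ℤ) : ℂ :=
  if x = y then fEnt n a b x x + (x : ℂ) + 1
  else if x < y ∧ (2:ℤ) ∣ (x - y) then fEnt n a b x y
  else if y < x ∧ (2:ℤ) ∣ (x - y) then fEnt n a b y x
  else 0
noncomputable def BZ (n : ℕ) (a b : ℝ) (x y : ℤ) : ℂ :=
  if 0 < x ∧ x ≤ y ∧ (2:ℤ) ∣ (x - y) then hEnt n a b x y else 0

lemma AZ_diag (n : ℕ) (a b : ℝ) (x : ℤ) : AZ n a b x x = fEnt n a b x x + (x:ℂ) + 1 := by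
  simp [AZ]
lemma AZ_lt (n : ℕ) (a b : ℝ) {x y : ℤ} (h : x < y) (hd : (2:ℤ) ∣ (x - y)) :
    AZ n a b x y = fEnt n a b x y := by
  rw [AZ, if_neg (by omega), if_pos ⟨h, hd⟩]
lemma AZ_gt (n : ℕ) (a b : ℝ) {x y : ℤ} (h : y < x) (hd : (2:ℤ) ∣ (x - y)) :
    AZ n a b x y = fEnt n a b y x := by
  rw [AZ, if_neg (by omega), if_neg (by omega), if_pos ⟨h, hd⟩]
lemma AZ_zero (n : ℕ) (a b : ℝ) {x y : ℤ} (hd : ¬ (2:ℤ) ∣ (x - y)) :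
    AZ n a b x y = 0 := by
  rw [AZ, if_neg (by omega), if_neg (by omega), if_neg (by omega)]
lemma BZ_pos (n : ℕ) (a b : ℝ) {x y : ℤ} (h0 : 0 < x) (hxy : x ≤ y) (hd : (2:ℤ) ∣ (x - y)) :
    BZ n a b x y = hEnt n a b x y := by
  rw [BZ, if_pos ⟨h0, hxy, hd⟩]
lemma BZ_zero (n : ℕ) (a b : ℝ) {x y : ℤ} (h : ¬ (0 < x ∧ x ≤ y ∧ (2:ℤ) ∣ (x - y))) :
    BZ n a b x y = 0 := by rw [BZ, if_neg h]

lemma neg_one_zpow_add_one (m : ℤ) : (-1 : ℂ) ^ (m + 1) = -((-1 : ℂ) ^ m) := by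
  rw [zpow_add_one₀ (by norm_num)]; ring
lemma neg_one_zpow_neg (m : ℤ) : (-1 : ℂ) ^ (-m) = (-1 : ℂ) ^ m := by
  rw [_root_.zpow_neg]
  rw [inv_eq_of_mul_eq_one_left]
  rw [← zpow_add₀ (by norm_num : (-1:ℂ) ≠ 0)]
  rw [show m + m = 2 * m by ring, _root_.zpow_mul]
  norm_num

example (x y : ℤ) (h : ¬ (2:ℤ) ∣ (x - y)) : ¬ (x = y) := by omega


lemma coreLL (n : ℕ) (hn : 2 ≤ n) (a b : ℝ)
    (hab : a ^ 2 + b ^ 2 = 1) (ha : a ≠ 0) (J K : ℤ)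
    (hJ1 : 1 ≤ J) (hJn : J < n) (hK1 : 1 ≤ K) (hKn : K < n) :
    AZ n a b J K = (if J = K then 1 else 0)
      + (((a:ℂ) * AZ n a b (J-1) (K-1)
            + (b:ℂ) * BZ n a b (if J = (n:ℤ)-1 then 0 else J+1) (K-1)) * (a:ℂ)
       + ((a:ℂ) * BZ n a b (if K = (n:ℤ)-1 then 0 else K+1) (J-1)
            + (b:ℂ) * AZ n a b (if J = (n:ℤ)-1 then 0 else (n:ℤ)-J-1)
                (if K = (n:ℤ)-1 then 0 else (n:ℤ)-K-1)) * (b:ℂ)) := by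
  have haC : (a:ℂ) ≠ 0 := Complex.ofReal_ne_zero.mpr ha
  have habC : (a:ℂ)^2 + (b:ℂ)^2 = 1 := by exact_mod_cast congrArg Complex.ofReal hab
  by_cases hpar : (2:ℤ) ∣ (J - K)
  · obtain ⟨m, hm⟩ := hpar
    rcases lt_trichotomy J K with hJK | hJK | hJK
    · -- J < K
      have hJtop : J ≠ (n:ℤ) - 1 := by omega
      simp only [if_neg hJtop, if_neg (by omega : ¬ J = K)]
      rw [AZ_lt n a b hJK ⟨m, hm⟩]
      rw [AZ_lt n a b (x := J-1) (y := K-1) (by omega) (by omega)]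
      rw [BZ_pos n a b (x := J+1) (y := K-1) (by omega) (by omega) (by omega)]
      rcases eq_or_ne K ((n:ℤ)-1) with hKtop | hKtop
      · simp only [if_pos hKtop]
        rw [BZ_zero n a b (x := (0:ℤ)) (y := J-1) (by omega)]
        rw [AZ_gt n a b (x := (n:ℤ)-J-1) (y := (0:ℤ)) (by omega) (by omega)]
        subst hKtop
        simp only [fEnt, hEnt]
        rw [show (J - ((n:ℤ)-1)) / 2 = m from by omega,
          show (J - 1 - ((n:ℤ)-1-1)) / 2 = m from by omega,
          show (J + 1 - ((n:ℤ)-1-1)) / 2 = m + 1 from by omega,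
          show ((0:ℤ) - ((n:ℤ)-J-1)) / 2 = m from by omega,
          neg_one_zpow_add_one]
        push_cast
        field_simp
        try ring
        try tauto
      · simp only [if_neg hKtop]
        rw [BZ_zero n a b (x := K+1) (y := J-1) (by omega)]
        rw [AZ_gt n a b (x := (n:ℤ)-J-1) (y := (n:ℤ)-K-1) (by omega) (by omega)]
        simp only [fEnt, hEnt]
        rw [show (J - K) / 2 = m from by omega,
          show (J - 1 - (K-1)) / 2 = m from by omega,
          show (J + 1 - (K-1)) / 2 = m + 1 from by omega,
          show (((n:ℤ)-K-1) - ((n:ℤ)-J-1)) / 2 = m from by omega,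
          neg_one_zpow_add_one]
        push_cast
        field_simp
        linear_combination (-(-1:ℂ)^m * (b:ℂ)^2 * (J:ℂ) * ((n:ℂ)-(K:ℂ)-1)) * habC
    · -- J = K
      subst hJK
      rw [if_pos rfl, AZ_diag, AZ_diag]
      rcases eq_or_ne J ((n:ℤ)-1) with hJtop | hJtop
      · simp only [if_pos hJtop]
        rw [BZ_zero n a b (x := (0:ℤ)) (y := J-1) (by omega)]
        rw [AZ_diag]
        subst hJtop
        simp only [fEnt, hEnt]
        rw [show (((n:ℤ)-1) - ((n:ℤ)-1)) / 2 = 0 from by omega,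
          show (((n:ℤ)-1-1) - ((n:ℤ)-1-1)) / 2 = 0 from by omega,
          show ((0:ℤ) - (0:ℤ)) / 2 = 0 from by omega, zpow_zero]
        push_cast
        field_simp
        linear_combination (-(a:ℂ)^2 * ((n:ℂ)-1)) * habC
      · simp only [if_neg hJtop]
        rw [BZ_zero n a b (x := J+1) (y := J-1) (by omega)]
        rw [AZ_diag]
        simp only [fEnt, hEnt]
        rw [show (J - J) / 2 = 0 from by omega,
          show (J - 1 - (J-1)) / 2 = 0 from by omega,
          show (((n:ℤ)-J-1) - ((n:ℤ)-J-1)) / 2 = 0 from by omega, zpow_zero]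
        push_cast
        field_simp
        linear_combination (-(J:ℂ) * ((b:ℂ)^2*((n:ℂ)-(J:ℂ)-1) + (a:ℂ)^2)) * habC
    · -- K < J
      have hKtop : K ≠ (n:ℤ) - 1 := by omega
      simp only [if_neg hKtop, if_neg (by omega : ¬ J = K)]
      rw [AZ_gt n a b hJK ⟨m, hm⟩]
      rw [AZ_gt n a b (x := J-1) (y := K-1) (by omega) (by omega)]
      rw [BZ_pos n a b (x := K+1) (y := J-1) (by omega) (by omega) (by omega)]
      rcases eq_or_ne J ((n:ℤ)-1) with hJtop | hJtop
      · simp only [if_pos hJtop]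
        rw [BZ_zero n a b (x := (0:ℤ)) (y := K-1) (by omega)]
        rw [AZ_lt n a b (x := (0:ℤ)) (y := (n:ℤ)-K-1) (by omega) (by omega)]
        subst hJtop
        simp only [fEnt, hEnt]
        rw [show (K - ((n:ℤ)-1)) / 2 = -m from by omega,
          show (K - 1 - ((n:ℤ)-1-1)) / 2 = -m from by omega,
          show (K + 1 - ((n:ℤ)-1-1)) / 2 = -m + 1 from by omega,
          show ((0:ℤ) - ((n:ℤ)-K-1)) / 2 = -m from by omega,
          neg_one_zpow_add_one, neg_one_zpow_neg]
        push_cast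
        field_simp
        ring
      · simp only [if_neg hJtop]
        rw [BZ_zero n a b (x := J+1) (y := K-1) (by omega)]
        rw [AZ_lt n a b (x := (n:ℤ)-J-1) (y := (n:ℤ)-K-1) (by omega) (by omega)]
        simp only [fEnt, hEnt]
        rw [show (K - J) / 2 = -m from by omega,
          show (K - 1 - (J-1)) / 2 = -m from by omega,
          show (K + 1 - (J-1)) / 2 = -m + 1 from by omega,
          show (((n:ℤ)-J-1) - ((n:ℤ)-K-1)) / 2 = -m from by omega,
          neg_one_zpow_add_one, neg_one_zpow_neg]
        push_cast
        field_simp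
        linear_combination (-(-1:ℂ)^m * (b:ℂ)^2 * (K:ℂ) * ((n:ℂ)-(J:ℂ)-1)) * habC
  · -- odd difference
    rw [AZ_zero n a b hpar, if_neg (by omega)]
    rw [AZ_zero n a b (x := J-1) (y := K-1) (by omega)]
    rcases eq_or_ne J ((n:ℤ)-1) with hJtop | hJtop <;>
      rcases eq_or_ne K ((n:ℤ)-1) with hKtop | hKtop
    · exfalso; omega
    · simp only [if_pos hJtop, if_neg hKtop]
      rw [BZ_zero n a b (x := (0:ℤ)) (y := K-1) (by omega),
        BZ_zero n a b (x := K+1) (y := J-1) (by omega),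
        AZ_zero n a b (x := (0:ℤ)) (y := (n:ℤ)-K-1) (by omega)]
      ring
    · simp only [if_neg hJtop, if_pos hKtop]
      rw [BZ_zero n a b (x := J+1) (y := K-1) (by omega),
        BZ_zero n a b (x := (0:ℤ)) (y := J-1) (by omega),
        AZ_zero n a b (x := (n:ℤ)-J-1) (y := (0:ℤ)) (by omega)]
      ring
    · simp only [if_neg hJtop, if_neg hKtop]
      rw [BZ_zero n a b (x := J+1) (y := K-1) (by omega),
        BZ_zero n a b (x := K+1) (y := J-1) (by omega),
        AZ_zero n a b (x := (n:ℤ)-J-1) (y := (n:ℤ)-K-1) (by omega)]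
      ring

lemma coreRL (n : ℕ) (hn : 2 ≤ n) (a b : ℝ)
    (hab : a ^ 2 + b ^ 2 = 1) (ha : a ≠ 0) (J K : ℤ)
    (hJ1 : 1 ≤ J) (hJn : J < n) (hK1 : 1 ≤ K) (hKn : K < n) :
    BZ n a b J K =
      (((b:ℂ) * AZ n a b (J-1) (K-1)
            + (-(a:ℂ)) * BZ n a b (if J = (n:ℤ)-1 then 0 else J+1) (K-1)) * (a:ℂ)
       + ((b:ℂ) * BZ n a b (if K = (n:ℤ)-1 then 0 else K+1) (J-1)
            + (-(a:ℂ)) * AZ n a b (if J = (n:ℤ)-1 then 0 else (n:ℤ)-J-1)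
                (if K = (n:ℤ)-1 then 0 else (n:ℤ)-K-1)) * (b:ℂ)) := by
  have haC : (a:ℂ) ≠ 0 := Complex.ofReal_ne_zero.mpr ha
  have habC : (a:ℂ)^2 + (b:ℂ)^2 = 1 := by exact_mod_cast congrArg Complex.ofReal hab
  by_cases hpar : (2:ℤ) ∣ (J - K)
  · obtain ⟨m, hm⟩ := hpar
    rcases lt_trichotomy J K with hJK | hJK | hJK
    · -- J < K
      have hJtop : J ≠ (n:ℤ) - 1 := by omega
      simp only [if_neg hJtop]
      rw [BZ_pos n a b (x := J) (y := K) (by omega) (by omega) (by omega)]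
      rw [AZ_lt n a b (x := J-1) (y := K-1) (by omega) (by omega)]
      rw [BZ_pos n a b (x := J+1) (y := K-1) (by omega) (by omega) (by omega)]
      rcases eq_or_ne K ((n:ℤ)-1) with hKtop | hKtop
      · simp only [if_pos hKtop]
        rw [BZ_zero n a b (x := (0:ℤ)) (y := J-1) (by omega)]
        rw [AZ_gt n a b (x := (n:ℤ)-J-1) (y := (0:ℤ)) (by omega) (by omega)]
        subst hKtop
        simp only [fEnt, hEnt]
        rw [show (J - ((n:ℤ)-1)) / 2 = m from by omega,
          show (J - 1 - ((n:ℤ)-1-1)) / 2 = m from by omega,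
          show (J + 1 - ((n:ℤ)-1-1)) / 2 = m + 1 from by omega,
          show ((0:ℤ) - ((n:ℤ)-J-1)) / 2 = m from by omega,
          neg_one_zpow_add_one]
        push_cast
        field_simp
        linear_combination (-(-1:ℂ)^m * (b:ℂ) * ((J:ℂ)-1)) * habC
      · simp only [if_neg hKtop]
        rw [BZ_zero n a b (x := K+1) (y := J-1) (by omega)]
        rw [AZ_gt n a b (x := (n:ℤ)-J-1) (y := (n:ℤ)-K-1) (by omega) (by omega)]
        simp only [fEnt, hEnt]
        rw [show (J - K) / 2 = m from by omega,
          show (J - 1 - (K-1)) / 2 = m from by omega,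
          show (J + 1 - (K-1)) / 2 = m + 1 from by omega,
          show (((n:ℤ)-K-1) - ((n:ℤ)-J-1)) / 2 = m from by omega,
          neg_one_zpow_add_one]
        push_cast
        field_simp
        linear_combination (-(-1:ℂ)^m * (b:ℂ) * ((J:ℂ)+(K:ℂ)-(n:ℂ))) * habC
    · -- J = K
      subst hJK
      rw [BZ_pos n a b (x := J) (y := J) (by omega) (by omega) (by omega)]
      rw [AZ_diag]
      rcases eq_or_ne J ((n:ℤ)-1) with hJtop | hJtop
      · simp only [if_pos hJtop]
        rw [BZ_zero n a b (x := (0:ℤ)) (y := J-1) (by omega)]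
        rw [AZ_diag]
        subst hJtop
        simp only [fEnt, hEnt]
        rw [show (((n:ℤ)-1) - ((n:ℤ)-1)) / 2 = 0 from by omega,
          show (((n:ℤ)-1-1) - ((n:ℤ)-1-1)) / 2 = 0 from by omega,
          show ((0:ℤ) - (0:ℤ)) / 2 = 0 from by omega, zpow_zero]
        push_cast
        field_simp
        linear_combination (-(b:ℂ) * ((n:ℂ)-2)) * habC
      · simp only [if_neg hJtop]
        rw [BZ_zero n a b (x := J+1) (y := J-1) (by omega)]
        rw [AZ_diag]
        simp only [fEnt, hEnt]
        rw [show (J - J) / 2 = 0 from by omega,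
          show (J - 1 - (J-1)) / 2 = 0 from by omega,
          show (((n:ℤ)-J-1) - ((n:ℤ)-J-1)) / 2 = 0 from by omega, zpow_zero]
        push_cast
        field_simp
        linear_combination (-(b:ℂ) * (2*(J:ℂ)-(n:ℂ))) * habC
    · -- K < J
      have hKtop : K ≠ (n:ℤ) - 1 := by omega
      simp only [if_neg hKtop]
      rw [BZ_zero n a b (x := J) (y := K) (by omega)]
      rw [AZ_gt n a b (x := J-1) (y := K-1) (by omega) (by omega)]
      rw [BZ_pos n a b (x := K+1) (y := J-1) (by omega) (by omega) (by omega)]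
      rcases eq_or_ne J ((n:ℤ)-1) with hJtop | hJtop
      · simp only [if_pos hJtop]
        rw [BZ_zero n a b (x := (0:ℤ)) (y := K-1) (by omega)]
        rw [AZ_lt n a b (x := (0:ℤ)) (y := (n:ℤ)-K-1) (by omega) (by omega)]
        subst hJtop
        simp only [fEnt, hEnt]
        rw [show (K - 1 - ((n:ℤ)-1-1)) / 2 = -m from by omega,
          show (K + 1 - ((n:ℤ)-1-1)) / 2 = -m + 1 from by omega,
          show ((0:ℤ) - ((n:ℤ)-K-1)) / 2 = -m from by omega,
          neg_one_zpow_add_one, neg_one_zpow_neg]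
        push_cast
        field_simp
        linear_combination (0:ℂ) * habC
      · simp only [if_neg hJtop]
        rw [BZ_zero n a b (x := J+1) (y := K-1) (by omega)]
        rw [AZ_lt n a b (x := (n:ℤ)-J-1) (y := (n:ℤ)-K-1) (by omega) (by omega)]
        simp only [fEnt, hEnt]
        rw [show (K - 1 - (J-1)) / 2 = -m from by omega,
          show (K + 1 - (J-1)) / 2 = -m + 1 from by omega,
          show (((n:ℤ)-J-1) - ((n:ℤ)-K-1)) / 2 = -m from by omega,
          neg_one_zpow_add_one, neg_one_zpow_neg]
        push_cast
        field_simp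
        linear_combination (0:ℂ) * habC
  · -- odd difference
    rw [BZ_zero n a b (x := J) (y := K) (by omega)]
    rw [AZ_zero n a b (x := J-1) (y := K-1) (by omega)]
    rcases eq_or_ne J ((n:ℤ)-1) with hJtop | hJtop <;>
      rcases eq_or_ne K ((n:ℤ)-1) with hKtop | hKtop
    · exfalso; omega
    · simp only [if_pos hJtop, if_neg hKtop]
      rw [BZ_zero n a b (x := (0:ℤ)) (y := K-1) (by omega),
        BZ_zero n a b (x := K+1) (y := J-1) (by omega),
        AZ_zero n a b (x := (0:ℤ)) (y := (n:ℤ)-K-1) (by omega)]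
      ring
    · simp only [if_neg hJtop, if_pos hKtop]
      rw [BZ_zero n a b (x := J+1) (y := K-1) (by omega),
        BZ_zero n a b (x := (0:ℤ)) (y := J-1) (by omega),
        AZ_zero n a b (x := (n:ℤ)-J-1) (y := (0:ℤ)) (by omega)]
      ring
    · simp only [if_neg hJtop, if_neg hKtop]
      rw [BZ_zero n a b (x := J+1) (y := K-1) (by omega),
        BZ_zero n a b (x := K+1) (y := J-1) (by omega),
        AZ_zero n a b (x := (n:ℤ)-J-1) (y := (n:ℤ)-K-1) (by omega)]
      ring

lemma coreRR (n : ℕ) (hn : 2 ≤ n) (a b : ℝ)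
    (hab : a ^ 2 + b ^ 2 = 1) (ha : a ≠ 0) (J K : ℤ)
    (hJ1 : 1 ≤ J) (hJn : J < n) (hK1 : 1 ≤ K) (hKn : K < n) :
    AZ n a b ((n:ℤ)-J) ((n:ℤ)-K) = (if J = K then 1 else 0)
      + (((b:ℂ) * AZ n a b (J-1) (K-1)
            + (-(a:ℂ)) * BZ n a b (if J = (n:ℤ)-1 then 0 else J+1) (K-1)) * (b:ℂ)
       + ((b:ℂ) * BZ n a b (if K = (n:ℤ)-1 then 0 else K+1) (J-1)
            + (-(a:ℂ)) * AZ n a b (if J = (n:ℤ)-1 then 0 else (n:ℤ)-J-1)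
                (if K = (n:ℤ)-1 then 0 else (n:ℤ)-K-1)) * (-(a:ℂ))) := by
  have haC : (a:ℂ) ≠ 0 := Complex.ofReal_ne_zero.mpr ha
  have habC : (a:ℂ)^2 + (b:ℂ)^2 = 1 := by exact_mod_cast congrArg Complex.ofReal hab
  by_cases hpar : (2:ℤ) ∣ (J - K)
  · obtain ⟨m, hm⟩ := hpar
    rcases lt_trichotomy J K with hJK | hJK | hJK
    · -- J < K
      have hJtop : J ≠ (n:ℤ) - 1 := by omega
      simp only [if_neg hJtop, if_neg (by omega : ¬ J = K)]
      rw [AZ_gt n a b (x := (n:ℤ)-J) (y := (n:ℤ)-K) (by omega) (by omega)]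
      rw [AZ_lt n a b (x := J-1) (y := K-1) (by omega) (by omega)]
      rw [BZ_pos n a b (x := J+1) (y := K-1) (by omega) (by omega) (by omega)]
      rcases eq_or_ne K ((n:ℤ)-1) with hKtop | hKtop
      · simp only [if_pos hKtop]
        rw [BZ_zero n a b (x := (0:ℤ)) (y := J-1) (by omega)]
        rw [AZ_gt n a b (x := (n:ℤ)-J-1) (y := (0:ℤ)) (by omega) (by omega)]
        subst hKtop
        simp only [fEnt, hEnt]
        rw [show (((n:ℤ)-((n:ℤ)-1)) - ((n:ℤ)-J)) / 2 = m from by omega,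
          show (J - 1 - ((n:ℤ)-1-1)) / 2 = m from by omega,
          show (J + 1 - ((n:ℤ)-1-1)) / 2 = m + 1 from by omega,
          show ((0:ℤ) - ((n:ℤ)-J-1)) / 2 = m from by omega,
          neg_one_zpow_add_one]
        push_cast
        field_simp
        linear_combination (-(-1:ℂ)^m * (b:ℂ)^2 * ((J:ℂ)-1)) * habC
      · simp only [if_neg hKtop]
        rw [BZ_zero n a b (x := K+1) (y := J-1) (by omega)]
        rw [AZ_gt n a b (x := (n:ℤ)-J-1) (y := (n:ℤ)-K-1) (by omega) (by omega)]
        simp only [fEnt, hEnt]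
        rw [show (((n:ℤ)-K) - ((n:ℤ)-J)) / 2 = m from by omega,
          show (J - 1 - (K-1)) / 2 = m from by omega,
          show (J + 1 - (K-1)) / 2 = m + 1 from by omega,
          show (((n:ℤ)-K-1) - ((n:ℤ)-J-1)) / 2 = m from by omega,
          neg_one_zpow_add_one]
        push_cast
        field_simp
        linear_combination (-(-1:ℂ)^m * (b:ℂ)^2 * ((J:ℂ)-1) * ((n:ℂ)-(K:ℂ))) * habC
    · -- J = K
      subst hJK
      rw [if_pos rfl, AZ_diag, AZ_diag]
      rcases eq_or_ne J ((n:ℤ)-1) with hJtop | hJtop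
      · simp only [if_pos hJtop]
        rw [BZ_zero n a b (x := (0:ℤ)) (y := J-1) (by omega)]
        rw [AZ_diag]
        subst hJtop
        simp only [fEnt, hEnt]
        rw [show (((n:ℤ)-((n:ℤ)-1)) - ((n:ℤ)-((n:ℤ)-1))) / 2 = 0 from by omega,
          show (((n:ℤ)-1-1) - ((n:ℤ)-1-1)) / 2 = 0 from by omega,
          show ((0:ℤ) - (0:ℤ)) / 2 = 0 from by omega, zpow_zero]
        push_cast
        field_simp
        linear_combination (-((b:ℂ)^2*((n:ℂ)-2) + (a:ℂ)^2)) * habC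
      · simp only [if_neg hJtop]
        rw [BZ_zero n a b (x := J+1) (y := J-1) (by omega)]
        rw [AZ_diag]
        simp only [fEnt, hEnt]
        rw [show (((n:ℤ)-J) - ((n:ℤ)-J)) / 2 = 0 from by omega,
          show (J - 1 - (J-1)) / 2 = 0 from by omega,
          show (((n:ℤ)-J-1) - ((n:ℤ)-J-1)) / 2 = 0 from by omega, zpow_zero]
        push_cast
        field_simp
        linear_combination (-(((n:ℂ)-(J:ℂ)) * ((b:ℂ)^2*(J:ℂ) + (a:ℂ)^2 - (b:ℂ)^2))) * habC
    · -- K < J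
      have hKtop : K ≠ (n:ℤ) - 1 := by omega
      simp only [if_neg hKtop, if_neg (by omega : ¬ J = K)]
      rw [AZ_lt n a b (x := (n:ℤ)-J) (y := (n:ℤ)-K) (by omega) (by omega)]
      rw [AZ_gt n a b (x := J-1) (y := K-1) (by omega) (by omega)]
      rw [BZ_pos n a b (x := K+1) (y := J-1) (by omega) (by omega) (by omega)]
      rcases eq_or_ne J ((n:ℤ)-1) with hJtop | hJtop
      · simp only [if_pos hJtop]
        rw [BZ_zero n a b (x := (0:ℤ)) (y := K-1) (by omega)]
        rw [AZ_lt n a b (x := (0:ℤ)) (y := (n:ℤ)-K-1) (by omega) (by omega)]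
        subst hJtop
        simp only [fEnt, hEnt]
        rw [show (((n:ℤ)-((n:ℤ)-1)) - ((n:ℤ)-K)) / 2 = -m from by omega,
          show (K - 1 - ((n:ℤ)-1-1)) / 2 = -m from by omega,
          show (K + 1 - ((n:ℤ)-1-1)) / 2 = -m + 1 from by omega,
          show ((0:ℤ) - ((n:ℤ)-K-1)) / 2 = -m from by omega,
          neg_one_zpow_add_one, neg_one_zpow_neg]
        push_cast
        field_simp
        linear_combination (-(-1:ℂ)^m * (b:ℂ)^2 * ((K:ℂ)-1)) * habC
      · simp only [if_neg hJtop]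
        rw [BZ_zero n a b (x := J+1) (y := K-1) (by omega)]
        rw [AZ_lt n a b (x := (n:ℤ)-J-1) (y := (n:ℤ)-K-1) (by omega) (by omega)]
        simp only [fEnt, hEnt]
        rw [show (((n:ℤ)-J) - ((n:ℤ)-K)) / 2 = -m from by omega,
          show (K - 1 - (J-1)) / 2 = -m from by omega,
          show (K + 1 - (J-1)) / 2 = -m + 1 from by omega,
          show (((n:ℤ)-J-1) - ((n:ℤ)-K-1)) / 2 = -m from by omega,
          neg_one_zpow_add_one, neg_one_zpow_neg]
        push_cast
        field_simp
        linear_combination (-(-1:ℂ)^m * (b:ℂ)^2 * ((K:ℂ)-1) * ((n:ℂ)-(J:ℂ))) * habC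
  · -- odd difference
    rw [AZ_zero n a b (x := (n:ℤ)-J) (y := (n:ℤ)-K) (by omega), if_neg (by omega)]
    rw [AZ_zero n a b (x := J-1) (y := K-1) (by omega)]
    rcases eq_or_ne J ((n:ℤ)-1) with hJtop | hJtop <;>
      rcases eq_or_ne K ((n:ℤ)-1) with hKtop | hKtop
    · exfalso; omega
    · simp only [if_pos hJtop, if_neg hKtop]
      rw [BZ_zero n a b (x := (0:ℤ)) (y := K-1) (by omega),
        BZ_zero n a b (x := K+1) (y := J-1) (by omega),
        AZ_zero n a b (x := (0:ℤ)) (y := (n:ℤ)-K-1) (by omega)]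
      ring
    · simp only [if_neg hJtop, if_pos hKtop]
      rw [BZ_zero n a b (x := J+1) (y := K-1) (by omega),
        BZ_zero n a b (x := (0:ℤ)) (y := J-1) (by omega),
        AZ_zero n a b (x := (n:ℤ)-J-1) (y := (0:ℤ)) (by omega)]
      ring
    · simp only [if_neg hJtop, if_neg hKtop]
      rw [BZ_zero n a b (x := J+1) (y := K-1) (by omega),
        BZ_zero n a b (x := K+1) (y := J-1) (by omega),
        AZ_zero n a b (x := (n:ℤ)-J-1) (y := (n:ℤ)-K-1) (by omega)]
      ring

lemma val_sub_one_cast (n : ℕ) [NeZero n] (j : Fin n) (hj : j ≠ 0) :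
    (((j - 1 : Fin n) : ℕ) : ℤ) = ((j : ℕ) : ℤ) - 1 := by
  obtain ⟨n', rfl⟩ : ∃ n', n = n' + 1 := ⟨n - 1, (Nat.succ_pred_eq_of_pos (NeZero.pos n)).symm⟩
  rw [Fin.coe_sub_one, if_neg hj]
  have : 1 ≤ (j : ℕ) := Nat.one_le_iff_ne_zero.mpr (fun h => hj (Fin.ext h))
  omega

lemma val_add_one_cast (n : ℕ) [NeZero n] (j : Fin n) :
    (((j + 1 : Fin n) : ℕ) : ℤ) =
      if ((j : ℕ) : ℤ) = (n : ℤ) - 1 then 0 else ((j : ℕ) : ℤ) + 1 := by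
  obtain ⟨n', rfl⟩ : ∃ n', n = n' + 1 := ⟨n - 1, (Nat.succ_pred_eq_of_pos (NeZero.pos n)).symm⟩
  rw [Fin.val_add_one]
  rcases eq_or_ne j (Fin.last n') with h | h
  · rw [if_pos h, if_pos (by subst h; simp [Fin.last])]
    simp
  · have : (j:ℕ) ≠ n' := fun hc => h (Fin.ext (by simp [Fin.last, hc]))
    rw [if_neg h, if_neg (by push_cast; omega)]
    push_cast; ring

lemma val_neg_cast (n : ℕ) [NeZero n] (x : Fin n) :
    (((-x : Fin n) : ℕ) : ℤ) = if ((x : ℕ) : ℤ) = 0 then 0 else (n : ℤ) - ((x : ℕ) : ℤ) := by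
  have hv : ((-x : Fin n) : ℕ) = (n - (x:ℕ)) % n := rfl
  have hx : (x:ℕ) < n := x.isLt
  rcases eq_or_ne (x:ℕ) 0 with h | h
  · rw [if_pos (by omega), hv, h]
    simp
  · rw [if_neg (by exact_mod_cast h), hv, Nat.mod_eq_of_lt (by omega)]
    push_cast; omega

lemma blockA_eq (n : ℕ) [NeZero n] (a b : ℝ) (x y : Fin n) :
    blockA n a b x y = AZ n a b ((x:ℕ):ℤ) ((y:ℕ):ℤ) := by
  simp only [blockA, of_apply]
  rcases lt_trichotomy (x:ℕ) (y:ℕ) with h | h | h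
  · rw [if_neg (fun hc => by subst hc; omega)]
    by_cases hd : (2:ℤ) ∣ (((x:ℕ):ℤ) - ((y:ℕ):ℤ))
    · rw [if_pos ⟨h, hd⟩, AZ_lt n a b (by exact_mod_cast h) hd]
    · rw [if_neg (fun hc => hd hc.2), if_neg (fun hc => hd hc.2), AZ_zero n a b hd]
  · have hxy : x = y := Fin.ext h
    subst hxy
    rw [if_pos rfl, AZ_diag]
    push_cast; ring
  · rw [if_neg (fun hc => by subst hc; omega), if_neg (by omega)]
    by_cases hd : (2:ℤ) ∣ (((x:ℕ):ℤ) - ((y:ℕ):ℤ))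
    · rw [if_pos ⟨h, hd⟩, AZ_gt n a b (by exact_mod_cast h) hd]
    · rw [if_neg (fun hc => hd hc.2), AZ_zero n a b hd]

lemma blockB_eq (n : ℕ) [NeZero n] (a b : ℝ) (x y : Fin n) :
    blockB n a b x y = BZ n a b ((x:ℕ):ℤ) ((y:ℕ):ℤ) := by
  simp only [blockB, of_apply, BZ]
  by_cases h : 0 < (x:ℕ) ∧ (x:ℕ) ≤ (y:ℕ) ∧ (2:ℤ) ∣ (((x:ℕ):ℤ) - ((y:ℕ):ℤ))
  · rw [if_pos h, if_pos ⟨by exact_mod_cast h.1, by exact_mod_cast h.2.1, h.2.2⟩]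
  · rw [if_neg h, if_neg (fun hc => h ⟨by exact_mod_cast hc.1, by exact_mod_cast hc.2.1, hc.2.2⟩)]

lemma AZ_symm (n : ℕ) (a b : ℝ) (x y : ℤ) : AZ n a b x y = AZ n a b y x := by
  rcases lt_trichotomy x y with h | h | h
  · by_cases hd : (2:ℤ) ∣ (x - y)
    · rw [AZ_lt n a b h hd, AZ_gt n a b h (by omega)]
    · rw [AZ_zero n a b hd, AZ_zero n a b (by omega)]
  · subst h; rfl
  · by_cases hd : (2:ℤ) ∣ (x - y)
    · rw [AZ_gt n a b h hd, AZ_lt n a b h (by omega)]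
    · rw [AZ_zero n a b hd, AZ_zero n a b (by omega)]

lemma blockA_symm (n : ℕ) [NeZero n] (a b : ℝ) (x y : Fin n) :
    blockA n a b x y = blockA n a b y x := by
  rw [blockA_eq, blockA_eq, AZ_symm]

lemma blockC_eqAZ (n : ℕ) [NeZero n] (a b : ℝ) (x y : Fin n) :
    blockC n a b x y = AZ n a b (((-x : Fin n):ℕ):ℤ) (((-y : Fin n):ℕ):ℤ) := by
  simp only [blockC, of_apply, blockA_eq]

lemma blockC_symm (n : ℕ) [NeZero n] (a b : ℝ) (x y : Fin n) :
    blockC n a b x y = blockC n a b y x := by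
  rw [blockC_eqAZ, blockC_eqAZ, AZ_symm]

section Keys
variable (n : ℕ) [NeZero n] (hn : 2 ≤ n) (a b : ℝ)
  (hab : a ^ 2 + b ^ 2 = 1) (ha : a ≠ 0)

lemma fin_facts (j : Fin n) (hj : j ≠ 0) :
    1 ≤ ((j:ℕ):ℤ) ∧ ((j:ℕ):ℤ) < (n:ℤ) := by
  have h1 : (j:ℕ) ≠ 0 := fun h => hj (Fin.ext h)
  have h2 : (j:ℕ) < n := j.isLt
  omega

lemma negsucc_cast (j : Fin n) :
    (((-(j+1) : Fin n):ℕ):ℤ) =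
      if ((j:ℕ):ℤ) = (n:ℤ)-1 then 0 else (n:ℤ) - ((j:ℕ):ℤ) - 1 := by
  rw [val_neg_cast n (j+1), val_add_one_cast n j]
  have h2 : (j:ℕ) < n := j.isLt
  split_ifs <;> omega

lemma delta_cast (j k : Fin n) :
    (if j = k then (1:ℂ) else 0) = if ((j:ℕ):ℤ) = ((k:ℕ):ℤ) then 1 else 0 := by
  rcases eq_or_ne j k with h | h
  · rw [if_pos h, if_pos (by exact_mod_cast congrArg (fun t : Fin n => (t:ℕ)) h)]
  · rw [if_neg h, if_neg (fun hc => h (Fin.ext (by exact_mod_cast hc)))]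

include hn hab ha

lemma keyLL (j k : Fin n) (hj : j ≠ 0) (hk : k ≠ 0) :
    blockA n a b j k = (if j = k then 1 else 0)
      + (((a:ℂ) * blockA n a b (j-1) (k-1) + (b:ℂ) * blockB n a b (j+1) (k-1)) * (a:ℂ)
       + ((a:ℂ) * blockB n a b (k+1) (j-1) + (b:ℂ) * blockC n a b (j+1) (k+1)) * (b:ℂ)) := by
  obtain ⟨hJ1, hJn⟩ := fin_facts n j hj
  obtain ⟨hK1, hKn⟩ := fin_facts n k hk
  rw [delta_cast, blockA_eq, blockA_eq, blockB_eq, blockB_eq, blockC_eqAZ,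
    val_sub_one_cast n j hj, val_sub_one_cast n k hk,
    val_add_one_cast n j, val_add_one_cast n k, negsucc_cast n j, negsucc_cast n k]
  exact coreLL n hn a b hab ha _ _ hJ1 hJn hK1 hKn

lemma keyRL (j k : Fin n) (hj : j ≠ 0) (hk : k ≠ 0) :
    blockB n a b j k =
      (((b:ℂ) * blockA n a b (j-1) (k-1) + (-(a:ℂ)) * blockB n a b (j+1) (k-1)) * (a:ℂ)
       + ((b:ℂ) * blockB n a b (k+1) (j-1) + (-(a:ℂ)) * blockC n a b (j+1) (k+1)) * (b:ℂ)) := by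
  obtain ⟨hJ1, hJn⟩ := fin_facts n j hj
  obtain ⟨hK1, hKn⟩ := fin_facts n k hk
  rw [blockB_eq, blockA_eq, blockB_eq, blockB_eq, blockC_eqAZ,
    val_sub_one_cast n j hj, val_sub_one_cast n k hk,
    val_add_one_cast n j, val_add_one_cast n k, negsucc_cast n j, negsucc_cast n k]
  exact coreRL n hn a b hab ha _ _ hJ1 hJn hK1 hKn

lemma keyRR (j k : Fin n) (hj : j ≠ 0) (hk : k ≠ 0) :
    blockC n a b j k = (if j = k then 1 else 0)
      + (((b:ℂ) * blockA n a b (j-1) (k-1) + (-(a:ℂ)) * blockB n a b (j+1) (k-1)) * (b:ℂ)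
       + ((b:ℂ) * blockB n a b (k+1) (j-1)
            + (-(a:ℂ)) * blockC n a b (j+1) (k+1)) * (-(a:ℂ))) := by
  obtain ⟨hJ1, hJn⟩ := fin_facts n j hj
  obtain ⟨hK1, hKn⟩ := fin_facts n k hk
  have hCjk : blockC n a b j k = AZ n a b ((n:ℤ) - ((j:ℕ):ℤ)) ((n:ℤ) - ((k:ℕ):ℤ)) := by
    rw [blockC_eqAZ, val_neg_cast n j, val_neg_cast n k,
      if_neg (by omega), if_neg (by omega)]
  rw [hCjk, delta_cast, blockA_eq, blockB_eq, blockB_eq, blockC_eqAZ,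
    val_sub_one_cast n j hj, val_sub_one_cast n k hk,
    val_add_one_cast n j, val_add_one_cast n k, negsucc_cast n j, negsucc_cast n k]
  exact coreRR n hn a b hab ha _ _ hJ1 hJn hK1 hKn

lemma keyLR (j k : Fin n) (hj : j ≠ 0) (hk : k ≠ 0) :
    blockB n a b k j =
      (((a:ℂ) * blockA n a b (j-1) (k-1) + (b:ℂ) * blockB n a b (j+1) (k-1)) * (b:ℂ)
       + ((a:ℂ) * blockB n a b (k+1) (j-1)
            + (b:ℂ) * blockC n a b (j+1) (k+1)) * (-(a:ℂ))) := by
  rw [keyRL n hn a b hab ha k j hk hj,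
    blockA_symm n a b (k-1) (j-1), blockC_symm n a b (k+1) (j+1)]
  ring

end Keys

lemma blockB_conj (n : ℕ) [NeZero n] (a b : ℝ) (x y : Fin n) :
    (starRingEnd ℂ) (blockB n a b x y) = blockB n a b x y := by
  simp only [blockB, of_apply]
  split_ifs
  · simp only [hEnt, _root_.map_mul, map_zpow₀, map_div₀, map_sub, map_add, map_neg,
      _root_.map_one, Complex.conj_ofReal, map_natCast, map_intCast]
  · exact map_zero _

lemma blockA_left_zero (n : ℕ) [NeZero n] (a b : ℝ) (k : Fin n) :
    blockA n a b 0 k = if k = 0 then 1 else 0 := by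
  rcases eq_or_ne k 0 with h | h
  · subst h; simp [blockA, fEnt]
  · rw [if_neg h]
    simp only [blockA, of_apply]
    split_ifs with h1 h2 h3
    · exact absurd h1.symm h
    · simp [fEnt]
    · exact absurd h3.1 (by simp)
    · rfl

lemma blockA_right_zero (n : ℕ) [NeZero n] (a b : ℝ) (j : Fin n) :
    blockA n a b j 0 = if j = 0 then 1 else 0 := by
  rcases eq_or_ne j 0 with h | h
  · subst h; simp [blockA, fEnt]
  · rw [if_neg h]
    simp only [blockA, of_apply]
    split_ifs with h1 h2 h3
    · exact absurd h1 h
    · exact absurd h2.1 (by simp)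
    · simp [fEnt]
    · rfl

lemma blockB_left_zero (n : ℕ) [NeZero n] (a b : ℝ) (k : Fin n) :
    blockB n a b 0 k = 0 := by simp [blockB]

lemma blockB_right_zero (n : ℕ) [NeZero n] (a b : ℝ) (j : Fin n) :
    blockB n a b j 0 = 0 := by
  simp only [blockB, of_apply]
  rw [if_neg]; rintro ⟨h1, h2, -⟩
  have h0 : ((0 : Fin n) : ℕ) = 0 := rfl
  omega

lemma blockC_left_zero (n : ℕ) [NeZero n] (a b : ℝ) (k : Fin n) :
    blockC n a b 0 k = if k = 0 then 1 else 0 := by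
  simp only [blockC, of_apply, neg_zero, blockA_left_zero]
  simp [neg_eq_zero]

lemma blockC_right_zero (n : ℕ) [NeZero n] (a b : ℝ) (j : Fin n) :
    blockC n a b j 0 = if j = 0 then 1 else 0 := by
  simp only [blockC, of_apply, neg_zero, blockA_right_zero]
  simp [neg_eq_zero]


/-- Verification step of the expected runtime of the quantum walk on the `n`-circle:
the explicitly given matrix `X` satisfies the fixed-point equation `X = I + E X Eᴴ`. -/
theorem quantum_walk_runtime_fixed_point
    (n : ℕ) [NeZero n] (hn : 2 ≤ n) (a b : ℝ)
    (hab : a ^ 2 + b ^ 2 = 1) (ha : a ≠ 0) :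
    fullX n a b = 1 + stepE n a b * fullX n a b * (stepE n a b)ᴴ := by

  ext ⟨c, j⟩ ⟨d, k⟩
  rw [Matrix.add_apply, mul_stepE_conjT_apply, stepE_mul_apply, stepE_mul_apply, one_apply]
  by_cases hk : k = 0
  · rw [if_pos hk, add_zero]
    subst hk
    fin_cases c <;> fin_cases d <;>
      simp [fullX, blockA_right_zero, blockB_left_zero, blockB_right_zero,
        blockC_right_zero, conjTranspose_apply, Prod.ext_iff, blockB_conj, eq_comm]
  by_cases hj : j = 0
  · rw [if_neg hk, if_pos hj, if_pos hj]
    subst hj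
    have : ∀ x : Fin n, ¬((0 : Fin n) = x ∧ x ≠ 0) := by rintro x ⟨rfl, h⟩; exact h rfl
    fin_cases c <;> fin_cases d <;>
      simp [fullX, blockA_left_zero, blockB_left_zero, blockB_right_zero,
        blockC_left_zero, conjTranspose_apply, Prod.ext_iff, blockB_conj, hk, eq_comm,
        Ne.symm hk]
  rw [if_neg hk, if_neg hj, if_neg hj]
  have hBC : ∀ x y : Fin n, (starRingEnd ℂ) (blockB n a b x y) = blockB n a b x y :=
    blockB_conj n a b
  fin_cases c <;> fin_cases d
  · simpa [fullX, Prod.ext_iff, coinT, hBC] using keyLL n hn a b hab ha j k hj hk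
  · simpa [fullX, Prod.ext_iff, coinT, hBC] using keyLR n hn a b hab ha j k hj hk
  · simpa [fullX, Prod.ext_iff, coinT, hBC] using keyRL n hn a b hab ha j k hj hk
  · simpa [fullX, Prod.ext_iff, coinT, hBC] using keyRR n hn a b hab ha j k hj hk
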